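/- Let $n, k$ be positive integers with $k \ge 2$, let $\{X_{ij} : 1 \le i \le j \le nk\}$ be i.i.d. standard normal random variables extended symmetrically, and let $V_1, \dots, V_n$ be any partition of $\{1, \dots, nk\}$ into $n$ disjoint sets of size $k$, with group averages $S_t = \binom{k}{2}^{-1} \sum_{\{i,j\} \subseteq V_t,\ i<j} X_{ij}$. Then for every $\epsilon > 0$, $P\bigl(\exists\, t \neq l \text{ such that } |S_t - S_l| > \epsilon\bigr) \le 4\, e^{2k(1 + \ln n)}\, e^{-\epsilon^2 k(k-1)/32}.$ -/

import Mathlib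

open MeasureTheory ProbabilityTheory
open scoped ENNReal

/-- The group average `S_t`: the average of the edge weights `X i j` (for `i < j`, both in `V`),
normalised by `k.choose 2 = k(k-1)/2`. -/
noncomputable def groupAvg {N : ℕ} {Ω : Type*} (k : ℕ)
    (X : Fin N → Fin N → Ω → ℝ) (V : Finset (Fin N)) (ω : Ω) : ℝ :=
  ((k.choose 2 : ℝ))⁻¹ * ∑ p ∈ V ×ˢ V, if p.1 < p.2 then X p.1 p.2 ω else 0

open scoped NNReal

section Aux
open Real

private lemma gauss_pdf_mul_exp (t x : ℝ) :
    gaussianPDFReal 0 1 x * exp (t * x) = exp (t ^ 2 / 2) * gaussianPDFReal t 1 x := by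
  simp only [gaussianPDFReal, NNReal.coe_one, mul_one, sub_zero]
  rw [mul_assoc, ← exp_add, mul_comm (exp (t ^ 2 / 2)), mul_assoc, ← exp_add]
  congr 1
  ring_nf

private lemma smul_eq_exp_pdf (t x : ℝ) : (gaussianPDFReal 0 1 x).toNNReal • exp (t * x)
    = exp (t ^ 2 / 2) * gaussianPDFReal t 1 x := by
  rw [NNReal.smul_def, Real.coe_toNNReal _ (gaussianPDFReal_nonneg 0 1 x), smul_eq_mul,
    gauss_pdf_mul_exp]

private lemma integral_exp_mul_gaussianReal (t : ℝ) :
    ∫ x, exp (t * x) ∂(gaussianReal 0 1) = exp (t ^ 2 / 2) := by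
  rw [gaussianReal_of_var_ne_zero 0 one_ne_zero]
  have hmeas : Measurable fun x => (gaussianPDFReal 0 1 x).toNNReal :=
    (measurable_gaussianPDFReal 0 1).real_toNNReal
  have hd : gaussianPDF 0 1 = fun x => ((gaussianPDFReal 0 1 x).toNNReal : ℝ≥0∞) := rfl
  rw [hd, integral_withDensity_eq_integral_smul hmeas]
  simp_rw [smul_eq_exp_pdf]
  rw [MeasureTheory.integral_const_mul, integral_gaussianPDFReal_eq_one t one_ne_zero, mul_one]

private lemma integrable_exp_mul_gaussianReal (t : ℝ) :
    Integrable (fun x => exp (t * x)) (gaussianReal 0 1) := by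
  rw [gaussianReal_of_var_ne_zero 0 one_ne_zero]
  have hmeas : Measurable fun x => (gaussianPDFReal 0 1 x).toNNReal :=
    (measurable_gaussianPDFReal 0 1).real_toNNReal
  have hd : gaussianPDF 0 1 = fun x => ((gaussianPDFReal 0 1 x).toNNReal : ℝ≥0∞) := rfl
  rw [hd, integrable_withDensity_iff_integrable_smul hmeas]
  simp_rw [smul_eq_exp_pdf]
  exact (integrable_gaussianPDFReal t 1).const_mul _

private lemma integrable_exp_mul_std {Ω : Type*} [MeasureSpace Ω] {Y : Ω → ℝ}
    (hY : Measurable Y) (hmap : Measure.map Y ℙ = gaussianReal 0 1) (t : ℝ) :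
    Integrable (fun ω => exp (t * Y ω)) ℙ := by
  have h := _root_.integrable_exp_mul_gaussianReal t
  rw [← hmap] at h
  exact (integrable_map_measure (Continuous.aestronglyMeasurable (by continuity))
    hY.aemeasurable).mp h

private lemma mgf_std {Ω : Type*} [MeasureSpace Ω] {Y : Ω → ℝ} (hY : Measurable Y)
    (hmap : Measure.map Y ℙ = gaussianReal 0 1) (t : ℝ) :
    mgf Y ℙ t = exp (t ^ 2 / 2) := by
  have h : mgf Y ℙ t = ∫ x, exp (t * x) ∂(Measure.map Y ℙ) := by
    rw [integral_map hY.aemeasurable (Continuous.aestronglyMeasurable (by continuity))]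
    rfl
  rw [h, hmap, integral_exp_mul_gaussianReal]

private lemma card_filter_lt_product {α : Type*} [LinearOrder α] [DecidableEq α]
    (V : Finset α) :
    ((V ×ˢ V).filter fun p => p.1 < p.2).card = V.card.choose 2 := by
  classical
  set A := (V ×ˢ V).filter fun p : α × α => p.1 < p.2 with hA
  have h1 : V.offDiag.filter (fun p : α × α => p.1 < p.2) = A := by
    rw [hA]
    ext ⟨a, b⟩
    simp only [Finset.mem_filter, Finset.mem_offDiag, Finset.mem_product]
    exact ⟨fun h => ⟨⟨h.1.1, h.1.2.1⟩, h.2⟩, fun h => ⟨⟨h.1.1, h.1.2, ne_of_lt h.2⟩, h.2⟩⟩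
  have h2 : V.offDiag.filter (fun p : α × α => ¬ p.1 < p.2) = A.image Prod.swap := by
    ext ⟨a, b⟩
    simp only [Finset.mem_filter, Finset.mem_offDiag, Finset.mem_image, hA,
      Finset.mem_product, Prod.exists, Prod.swap_prod_mk, Prod.mk.injEq]
    constructor
    · rintro ⟨⟨ha, hb, hne⟩, hnlt⟩
      exact ⟨b, a, ⟨⟨hb, ha⟩, lt_of_le_of_ne (not_lt.mp hnlt) (Ne.symm hne)⟩, rfl, rfl⟩
    · rintro ⟨x, y, ⟨⟨hx, hy⟩, hlt⟩, rfl, rfl⟩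
      exact ⟨⟨hy, hx, (ne_of_lt hlt).symm⟩, not_lt.mpr hlt.le⟩
  have h3 := Finset.card_filter_add_card_filter_not
    (s := V.offDiag) (p := fun p : α × α => p.1 < p.2)
  rw [h1, h2, Finset.card_image_of_injective _ Prod.swap_injective, Finset.offDiag_card] at h3
  have h4 : V.card * V.card - V.card = V.card * (V.card - 1) := by
    rcases Nat.eq_zero_or_pos V.card with h | h
    · simp [h]
    · have := Nat.mul_sub V.card V.card 1
      simpa using this.symm
  rw [h4] at h3
  rw [Nat.choose_two_right]
  omega

end Aux

/-- **Union bound over a partition.**  Let `n, k` be positive integers with `k ≥ 2`, let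
`X i j` (`1 ≤ i ≤ j ≤ nk`) be i.i.d. standard normal random variables extended symmetrically,
and let `V₁, …, Vₙ` be any partition of `{1, …, nk}` into `n` disjoint sets of size `k`, with
group averages `S_t`.  Then for every `ε > 0`,
`P(∃ t ≠ l, |S_t - S_l| > ε) ≤ 4·e^{2k(1 + ln n)}·e^{-ε²k(k-1)/32}`. -/
theorem union_bound_partition {Ω : Type*} [MeasureSpace Ω]
    [IsProbabilityMeasure (ℙ : Measure Ω)]
    (n k : ℕ) (hn : 0 < n) (hk : 2 ≤ k)
    (X : Fin (n * k) → Fin (n * k) → Ω → ℝ)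
    (hsym : ∀ i j, X j i = X i j)
    (hmeas : ∀ i j, Measurable (X i j))
    (hindep : iIndepFun
      (fun p : {p : Fin (n * k) × Fin (n * k) // p.1 ≤ p.2} => X p.1.1 p.1.2) ℙ)
    (hgauss : ∀ i j : Fin (n * k), i ≤ j → Measure.map (X i j) ℙ = gaussianReal 0 1)
    (V : Fin n → Finset (Fin (n * k)))
    (hcard : ∀ t, (V t).card = k)
    (hdisj : ∀ t l, t ≠ l → Disjoint (V t) (V l))
    (hcover : Finset.univ.biUnion V = (Finset.univ : Finset (Fin (n * k))))
    (ε : ℝ) (hε : 0 < ε) :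
    ℙ {ω | ∃ t l : Fin n, t ≠ l ∧ ε < |groupAvg k X (V t) ω - groupAvg k X (V l) ω|}
      ≤ ENNReal.ofReal (4 * Real.exp (2 * (k : ℝ) * (1 + Real.log (n : ℝ))) *
          Real.exp (-(ε ^ 2 * (k : ℝ) * ((k : ℝ) - 1)) / 32)) := by
  classical
  set Y : {p : Fin (n * k) × Fin (n * k) // p.1 ≤ p.2} → Ω → ℝ :=
    fun q => X q.1.1 q.1.2 with hY
  set m := k.choose 2 with hm
  have hmpos : 0 < m := Nat.choose_pos hk
  have hmR : (0 : ℝ) < (m : ℝ) := by exact_mod_cast hmpos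
  have hYm : ∀ q, Measurable (Y q) := fun q => hmeas _ _
  have hYg : ∀ q, Measure.map (Y q) ℙ = gaussianReal 0 1 := fun q => hgauss _ _ q.2
  set s : Fin n → Finset {p : Fin (n * k) × Fin (n * k) // p.1 ≤ p.2} :=
    fun t => ((V t ×ˢ V t).filter fun p => p.1 < p.2).subtype (fun p => p.1 ≤ p.2) with hs
  have hscard : ∀ t, (s t).card = m := by
    intro t
    rw [hs]
    rw [Finset.card_subtype, Finset.filter_true_of_mem
      (fun p hp => le_of_lt (Finset.mem_filter.mp hp).2), card_filter_lt_product, hcard]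
  have hSeq : ∀ (t : Fin n) (ω : Ω),
      (∑ q ∈ s t, Y q) ω = (m : ℝ) * groupAvg k X (V t) ω := by
    intro t ω
    have h1 : (∑ q ∈ s t, Y q) ω = ∑ q ∈ s t, (fun p : _ × _ => X p.1 p.2 ω) q.1 := by
      rw [Finset.sum_apply]
    rw [h1]
    simp only [hs]
    rw [Finset.sum_subtype_eq_sum_filter
      (fun p : Fin (n * k) × Fin (n * k) => X p.1 p.2 ω), Finset.filter_true_of_mem
      (fun p hp => le_of_lt (Finset.mem_filter.mp hp).2)]
    rw [Finset.sum_filter]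
    unfold groupAvg
    rw [← mul_assoc, mul_inv_cancel₀ (ne_of_gt hmR), one_mul]
  -- Chernoff ingredients
  have hint : ∀ (t : Fin n) (c : ℝ),
      Integrable (fun ω => Real.exp (c * (∑ q ∈ s t, Y q) ω)) ℙ := fun t c =>
    hindep.integrable_exp_mul_sum hYm (fun q _ => integrable_exp_mul_std (hYm q) (hYg q) c)
  have hmgf : ∀ (t : Fin n) (c : ℝ),
      mgf (∑ q ∈ s t, Y q) ℙ c = Real.exp ((m : ℝ) * (c ^ 2 / 2)) := by
    intro t c
    rw [hindep.mgf_sum hYm, Finset.prod_congr rfl (fun q _ => mgf_std (hYm q) (hYg q) c),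
      Finset.prod_const, hscard, ← Real.exp_nat_mul]
  set β : ℝ := Real.exp (-((m : ℝ) * ε ^ 2 / 8)) with hβ
  set E : Fin n → Set Ω := fun t => {ω | ε / 2 * (m : ℝ) ≤ (∑ q ∈ s t, Y q) ω} with hE
  set F : Fin n → Set Ω := fun t => {ω | (∑ q ∈ s t, Y q) ω ≤ -(ε / 2 * (m : ℝ))} with hF
  have hEbound : ∀ t, ℙ (E t) ≤ ENNReal.ofReal β := by
    intro t
    have h := measure_ge_le_exp_mul_mgf (μ := ℙ) (X := ∑ q ∈ s t, Y q) (ε / 2 * (m : ℝ))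
      (by positivity) (hint t (ε / 2))
    rw [hmgf t (ε / 2), ← Real.exp_add] at h
    have h2 : -(ε / 2) * (ε / 2 * (m : ℝ)) + (m : ℝ) * ((ε / 2) ^ 2 / 2)
        = -((m : ℝ) * ε ^ 2 / 8) := by ring
    rw [h2] at h
    exact (ENNReal.le_ofReal_iff_toReal_le (measure_ne_top _ _) (Real.exp_pos _).le).mpr h
  have hFbound : ∀ t, ℙ (F t) ≤ ENNReal.ofReal β := by
    intro t
    have h := measure_le_le_exp_mul_mgf (μ := ℙ) (X := ∑ q ∈ s t, Y q) (t := -(ε / 2))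
      (-(ε / 2 * (m : ℝ))) (by linarith) (hint t (-(ε / 2)))
    rw [hmgf t (-(ε / 2)), ← Real.exp_add] at h
    have h2 : -(-(ε / 2)) * -(ε / 2 * (m : ℝ)) + (m : ℝ) * ((-(ε / 2)) ^ 2 / 2)
        = -((m : ℝ) * ε ^ 2 / 8) := by ring
    rw [h2] at h
    exact (ENNReal.le_ofReal_iff_toReal_le (measure_ne_top _ _) (Real.exp_pos _).le).mpr h
  -- event inclusion
  have hsub : {ω | ∃ t l : Fin n, t ≠ l ∧
      ε < |groupAvg k X (V t) ω - groupAvg k X (V l) ω|} ⊆ ⋃ t, E t ∪ F t := by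
    intro ω hω
    obtain ⟨t, l, hne, habs⟩ := hω
    set a := groupAvg k X (V t) ω
    set b := groupAvg k X (V l) ω
    have htri : |a - b| ≤ |a| + |b| := by
      rw [sub_eq_add_neg]
      exact (abs_add_le _ _).trans (by rw [abs_neg])
    have hor : ε / 2 < |a| ∨ ε / 2 < |b| := by
      by_contra h
      push_neg at h
      linarith [h.1, h.2]
    have key : ∀ u : Fin n, ε / 2 < |groupAvg k X (V u) ω| → ω ∈ E u ∪ F u := by
      intro u hu
      have hT := hSeq u ω
      rcases lt_abs.mp hu with h | h
      · left
        show ε / 2 * (m : ℝ) ≤ (∑ q ∈ s u, Y q) ω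
        rw [hT]
        nlinarith
      · right
        show (∑ q ∈ s u, Y q) ω ≤ -(ε / 2 * (m : ℝ))
        rw [hT]
        nlinarith
    rcases hor with h | h
    · exact Set.mem_iUnion.mpr ⟨t, key t h⟩
    · exact Set.mem_iUnion.mpr ⟨l, key l h⟩
  -- union bound
  calc ℙ {ω | ∃ t l : Fin n, t ≠ l ∧
        ε < |groupAvg k X (V t) ω - groupAvg k X (V l) ω|}
      ≤ ℙ (⋃ t, E t ∪ F t) := measure_mono hsub
    _ ≤ ∑' t : Fin n, ℙ (E t ∪ F t) := measure_iUnion_le _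
    _ ≤ ∑' t : Fin n, (ENNReal.ofReal β + ENNReal.ofReal β) :=
        ENNReal.tsum_le_tsum fun t =>
          (measure_union_le _ _).trans (add_le_add (hEbound t) (hFbound t))
    _ = (n : ℝ≥0∞) * (ENNReal.ofReal β + ENNReal.ofReal β) := by
        rw [tsum_fintype, Finset.sum_const, Finset.card_univ, Fintype.card_fin, nsmul_eq_mul]
    _ = ENNReal.ofReal ((n : ℝ) * (β + β)) := by
        rw [← ENNReal.ofReal_add (Real.exp_pos _).le (Real.exp_pos _).le,
          ← ENNReal.ofReal_natCast n, ← ENNReal.ofReal_mul (Nat.cast_nonneg n)]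
    _ ≤ ENNReal.ofReal (4 * Real.exp (2 * (k : ℝ) * (1 + Real.log (n : ℝ))) *
          Real.exp (-(ε ^ 2 * (k : ℝ) * ((k : ℝ) - 1)) / 32)) := by
        apply ENNReal.ofReal_le_ofReal
        have hmval : (m : ℝ) = (k : ℝ) * ((k : ℝ) - 1) / 2 := by
          rw [hm, Nat.cast_choose_two]
        have hkR : (2 : ℝ) ≤ (k : ℝ) := by exact_mod_cast hk
        have hn1 : (1 : ℝ) ≤ (n : ℝ) := by exact_mod_cast hn
        have hlog : 0 ≤ Real.log (n : ℝ) := Real.log_nonneg hn1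
        set x := ε ^ 2 * (k : ℝ) * ((k : ℝ) - 1) with hx
        have hx0 : 0 ≤ x := by nlinarith [sq_nonneg ε]
        have hβval : β = Real.exp (-(x / 16)) := by
          rw [hβ, hmval]
          congr 1
          ring
        have h1 : Real.exp (-(x / 16)) ≤ Real.exp (-x / 32) :=
          Real.exp_le_exp.mpr (by linarith)
        have h2 : (n : ℝ) ≤ Real.exp (2 * (k : ℝ) * (1 + Real.log (n : ℝ))) := by
          calc (n : ℝ) = Real.exp (Real.log (n : ℝ)) := (Real.exp_log (by linarith)).symm
            _ ≤ _ := Real.exp_le_exp.mpr (by nlinarith)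
        calc (n : ℝ) * (β + β) = 2 * (n : ℝ) * Real.exp (-(x / 16)) := by
              rw [hβval]; ring
          _ ≤ 2 * Real.exp (2 * (k : ℝ) * (1 + Real.log (n : ℝ))) * Real.exp (-x / 32) := by
              gcongr
          _ ≤ 4 * Real.exp (2 * (k : ℝ) * (1 + Real.log (n : ℝ))) * Real.exp (-x / 32) := by
              have e1 := Real.exp_pos (2 * (k : ℝ) * (1 + Real.log (n : ℝ)))
              have e2 := Real.exp_pos (-x / 32)
              nlinarith
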